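/- Let Ω have smooth boundary, μ > 0, λ > 0, and define, for u ∈ V with L²-orthogonal decomposition u = u_Z + u_{Z⊥} (u_Z ∈ Z, u_{Z⊥} ∈ Z⊥), the bilinear form ⟨(A+Y)u, v⟩ = 2μ(ε(u),ε(v))_{L²} + (u_Z, v_Z)_{L²}. Then for each l ∈ V* there exists a unique pair (u, p) ∈ V × Q satisfying ⟨(A+Y)u, v⟩ + (p, ∇·v)_{L²} = ⟨l, v⟩ for all v ∈ V and (q, ∇·u)_{L²} − λ⁻¹(p, q)_{L²} = 0 for all q ∈ Q. Moreover, if l ∈ Z° then u ∈ Z⊥ and the triplet (u, p, 0) is the unique solution of the three-field problem: 2μ(ε(u),ε(v)) + (p,∇·v) + (ν,v) = ⟨l,v⟩, (q,∇·u) − λ⁻¹(p,q) = 0, (η,u) = 0 for all v ∈ V, q ∈ Q, η ∈ Z, with ν = 0. -/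

import Mathlib

open RealInnerProductSpace

set_option maxHeartbeats 1000000 in
/-- single saddle point formulation of the mixed problem.

Abstract Hilbert-space formalization: `V ≅ [H¹(Ω)]³` with the norm `‖·‖₁`
(`‖v‖₁² = ‖Jv‖² + ‖grad v‖²`), `J : V → HL ≅ [L²(Ω)]³` the (injective) embedding,
`QL ≅ Q = L²(Ω)`, `eps` the symmetric gradient, `dv` the divergence,
`Z = ker ε` the six-dimensional space of rigid motions, `PZ` the L²-orthogonal
projection onto `Z` (so `u_Z = PZ u` and
`⟨(A+Y)u,v⟩ = 2μ(ε(u),ε(v))_{L²} + (u_Z,v_Z)_{L²}`).  On a smooth bounded domain: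
Korn's second inequality holds on `Z⊥` (constant `C₁`), `‖z‖₁ ≤ C₂‖z‖_{L²}` on `Z`,
and the divergence inf-sup condition holds with constant `Cd⁻¹` (hypothesis `hdiv`).

Conclusion: for `μ > 0`, `λ > 0` and each `l ∈ V*` there is a unique pair
`(u,p) ∈ V × Q` with `⟨(A+Y)u,v⟩ + (p,∇·v) = ⟨l,v⟩ ∀ v ∈ V` and
`(q,∇·u) − λ⁻¹(p,q) = 0 ∀ q ∈ Q`.  Moreover, if `l ∈ Z°` then `u ∈ Z⊥` and the
triplet `(u,p,0)` is the unique solution of the three-field problem. -/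
theorem single_saddle_point_formulation
    {V HL SL QL WL : Type}
    [NormedAddCommGroup V] [InnerProductSpace ℝ V] [CompleteSpace V]
    [NormedAddCommGroup HL] [InnerProductSpace ℝ HL]
    [NormedAddCommGroup SL] [InnerProductSpace ℝ SL]
    [NormedAddCommGroup QL] [InnerProductSpace ℝ QL] [CompleteSpace QL]
    [NormedAddCommGroup WL] [InnerProductSpace ℝ WL]
    (J : V →L[ℝ] HL) (eps : V →L[ℝ] SL) (dv : V →L[ℝ] QL) (grad : V →L[ℝ] WL)
    (hJ : Function.Injective J)
    (hnorm : ∀ v : V, ‖v‖ ^ 2 = ‖J v‖ ^ 2 + ‖grad v‖ ^ 2)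
    (heps : ∀ v : V, ‖eps v‖ ≤ ‖grad v‖)
    (hdvg : ∀ v : V, ‖dv v‖ ≤ Real.sqrt 3 * ‖grad v‖)
    (hdve : ∀ v : V, ‖dv v‖ ≤ Real.sqrt 3 * ‖eps v‖)
    (Z : Submodule ℝ V) (hZ : ∀ v : V, v ∈ Z ↔ eps v = 0)
    (hZdim : Module.finrank ℝ Z = 6)
    (PZ : V →ₗ[ℝ] V)
    (hPZmem : ∀ u : V, PZ u ∈ Z)
    (hPZperp : ∀ u : V, ∀ z ∈ Z, ⟪J (u - PZ u), J z⟫ = 0)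
    (C₁ : ℝ) (hC₁ : 0 < C₁)
    (hKorn : ∀ u : V, (∀ z ∈ Z, ⟪J u, J z⟫ = 0) → C₁ * ‖u‖ ^ 2 ≤ ‖eps u‖ ^ 2)
    (C₂ : ℝ) (hC₂ : 0 < C₂)
    (hrig : ∀ z ∈ Z, ‖z‖ ≤ C₂ * ‖J z‖)
    (Cd : ℝ) (hCd : 0 < Cd)
    (hdiv : ∀ p : QL, ∃ v : V, v ≠ 0 ∧ Cd⁻¹ * ‖p‖ * ‖v‖ ≤ ⟪p, dv v⟫)
    (μ lam : ℝ) (hμ : 0 < μ) (hlam : 0 < lam)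
    (l : V →L[ℝ] ℝ) :
    -- existence and uniqueness for the single saddle point problem
    (∃! up : V × QL,
        (∀ v : V, 2 * μ * ⟪eps up.1, eps v⟫ + ⟪J (PZ up.1), J (PZ v)⟫
            + ⟪up.2, dv v⟫ = l v)
        ∧ (∀ q : QL, ⟪q, dv up.1⟫ - lam⁻¹ * ⟪up.2, q⟫ = 0))
    -- if l ∈ Z° the solution is orthogonal to Z and (u, p, 0) is the unique
    -- solution of the three-field problem
    ∧ ((∀ z ∈ Z, l z = 0) →
        ∀ (u : V) (p : QL),
          ((∀ v : V, 2 * μ * ⟪eps u, eps v⟫ + ⟪J (PZ u), J (PZ v)⟫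
              + ⟪p, dv v⟫ = l v)
            ∧ (∀ q : QL, ⟪q, dv u⟫ - lam⁻¹ * ⟪p, q⟫ = 0)) →
          (∀ z ∈ Z, ⟪J u, J z⟫ = 0)
          ∧ ((∀ v : V, 2 * μ * ⟪eps u, eps v⟫ + ⟪p, dv v⟫
                + ⟪J (0 : V), J v⟫ = l v)
              ∧ (∀ q : QL, ⟪q, dv u⟫ - lam⁻¹ * ⟪p, q⟫ = 0)
              ∧ (∀ η ∈ Z, ⟪J η, J u⟫ = 0))
          ∧ (∀ (u' : V) (p' : QL) (ν' : V), ν' ∈ Z →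
              ((∀ v : V, 2 * μ * ⟪eps u', eps v⟫ + ⟪p', dv v⟫
                  + ⟪J ν', J v⟫ = l v)
                ∧ (∀ q : QL, ⟪q, dv u'⟫ - lam⁻¹ * ⟪p', q⟫ = 0)
                ∧ (∀ η ∈ Z, ⟪J η, J u'⟫ = 0)) →
              u' = u ∧ p' = p ∧ ν' = 0)) := by
  classical
  -- elementary norm bounds
  have hJle : ∀ v : V, ‖J v‖ ≤ ‖v‖ := by
    intro v; nlinarith [hnorm v, norm_nonneg (J v), norm_nonneg v, norm_nonneg (grad v)]
  have hepsZ : ∀ z ∈ Z, eps z = 0 := fun z hz => (hZ z).mp hz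
  have hdvZ : ∀ z ∈ Z, dv z = 0 := by
    intro z hz
    have h := hdve z
    rw [hepsZ z hz] at h
    simp at h
    exact norm_le_zero_iff.mp (by simpa using h)
  -- PZ fixes Z
  have hPZid : ∀ z ∈ Z, PZ z = z := by
    intro z hz
    have h := hPZperp z (z - PZ z) (Z.sub_mem hz (hPZmem z))
    have h0 : J (z - PZ z) = 0 := inner_self_eq_zero.mp h
    have : z - PZ z = 0 := hJ (by rw [h0, map_zero])
    have := sub_eq_zero.mp this
    exact this.symm
  -- J (PZ u) is bounded by J u
  have hJPZ : ∀ u : V, ‖J (PZ u)‖ ≤ ‖J u‖ := by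
    intro u
    have h := hPZperp u (PZ u) (hPZmem u)
    have heq : ⟪J (PZ u), J (PZ u)⟫ = ⟪J u, J (PZ u)⟫ := by
      rw [map_sub, inner_sub_left] at h; linarith
    have h2 : ‖J (PZ u)‖ ^ 2 = ⟪J u, J (PZ u)⟫ := by
      rw [← heq, real_inner_self_eq_norm_sq]
    have h3 := real_inner_le_norm (J u) (J (PZ u))
    nlinarith [norm_nonneg (J (PZ u)), norm_nonneg (J u)]
  have hPZbound : ∀ u : V, ‖PZ u‖ ≤ C₂ * ‖u‖ := by
    intro u
    calc ‖PZ u‖ ≤ C₂ * ‖J (PZ u)‖ := hrig (PZ u) (hPZmem u)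
      _ ≤ C₂ * ‖J u‖ := by have := hJPZ u; nlinarith
      _ ≤ C₂ * ‖u‖ := by have := hJle u; nlinarith
  let PZc : V →L[ℝ] V := PZ.mkContinuous C₂ hPZbound
  have hPZc : ∀ u : V, PZc u = PZ u := fun u => rfl
  -- the coercive bilinear form
  let B : V →L[ℝ] V →L[ℝ] ℝ :=
    (2 * μ) • ((innerSL ℝ).bilinearComp eps eps)
      + (innerSL ℝ).bilinearComp (J.comp PZc) (J.comp PZc)
      + lam • ((innerSL ℝ).bilinearComp dv dv)
  have hB : ∀ u v : V, B u v
      = 2 * μ * ⟪eps u, eps v⟫ + ⟪J (PZ u), J (PZ v)⟫ + lam * ⟪dv u, dv v⟫ := by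
    intro u v
    simp [B, ContinuousLinearMap.bilinearComp_apply, hPZc]
  -- coercivity
  have hα : 0 < min (μ * C₁) ((2 * C₂ ^ 2)⁻¹) := by positivity
  have hcoer : IsCoercive B := by
    refine ⟨min (μ * C₁) ((2 * C₂ ^ 2)⁻¹), hα, ?_⟩
    intro u
    set α := min (μ * C₁) ((2 * C₂ ^ 2)⁻¹) with hαdef
    rw [hB u u]
    have hzmem := hPZmem u
    have hkorn := hKorn (u - PZ u) (hPZperp u)
    have heq : eps (u - PZ u) = eps u := by
      rw [map_sub, hepsZ _ hzmem, sub_zero]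
    rw [heq] at hkorn
    have hr := hrig (PZ u) hzmem
    have hns : ‖u‖ ≤ ‖u - PZ u‖ + ‖PZ u‖ := by
      simpa using norm_add_le (u - PZ u) (PZ u)
    have e1 : ⟪eps u, eps u⟫ = ‖eps u‖ ^ 2 := real_inner_self_eq_norm_sq _
    have e2 : ⟪J (PZ u), J (PZ u)⟫ = ‖J (PZ u)‖ ^ 2 := real_inner_self_eq_norm_sq _
    have e3 : ⟪dv u, dv u⟫ = ‖dv u‖ ^ 2 := real_inner_self_eq_norm_sq _
    rw [e1, e2, e3]
    have hα1 : α ≤ μ * C₁ := min_le_left _ _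
    have hα2 : α * (2 * C₂ ^ 2) ≤ 1 := by
      have h2 : α ≤ (2 * C₂ ^ 2)⁻¹ := min_le_right _ _
      have hpos : (0:ℝ) < 2 * C₂ ^ 2 := by positivity
      calc α * (2 * C₂ ^ 2) ≤ (2 * C₂ ^ 2)⁻¹ * (2 * C₂ ^ 2) := by nlinarith
        _ = 1 := inv_mul_cancel₀ (ne_of_gt hpos)
    have hαpos : 0 < α := hα
    have s1 : ‖u‖ * ‖u‖ ≤ 2 * ‖u - PZ u‖ ^ 2 + 2 * ‖PZ u‖ ^ 2 := by
      nlinarith [sq_nonneg (‖u - PZ u‖ - ‖PZ u‖), norm_nonneg u, norm_nonneg (u - PZ u),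
        norm_nonneg (PZ u)]
    have s2 : 2 * α * ‖u - PZ u‖ ^ 2 ≤ 2 * μ * ‖eps u‖ ^ 2 := by
      nlinarith [mul_le_mul_of_nonneg_right hα1 (sq_nonneg ‖u - PZ u‖),
        mul_le_mul_of_nonneg_left hkorn hμ.le]
    have hzsq : ‖PZ u‖ ^ 2 ≤ C₂ ^ 2 * ‖J (PZ u)‖ ^ 2 := by
      nlinarith [hr, norm_nonneg (PZ u), norm_nonneg (J (PZ u)), hC₂.le]
    have s3 : 2 * α * ‖PZ u‖ ^ 2 ≤ ‖J (PZ u)‖ ^ 2 := by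
      nlinarith [mul_le_mul_of_nonneg_left hzsq hαpos.le,
        mul_le_mul_of_nonneg_right hα2 (sq_nonneg ‖J (PZ u)‖)]
    nlinarith [mul_le_mul_of_nonneg_left s1 hαpos.le, s2, s3,
      mul_nonneg hlam.le (sq_nonneg ‖dv u‖)]
  -- second equation is equivalent to p = lam • dv u
  have hsecond : ∀ (u : V) (p : QL),
      (∀ q : QL, ⟪q, dv u⟫ - lam⁻¹ * ⟪p, q⟫ = 0) ↔ p = lam • dv u := by
    intro u p
    constructor
    · intro h
      have key : ∀ q : QL, ⟪dv u - lam⁻¹ • p, q⟫ = 0 := by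
        intro q
        have := h q
        rw [inner_sub_left, real_inner_smul_left]
        linarith [this, real_inner_comm q (dv u)]
      have h0 : dv u - lam⁻¹ • p = 0 := inner_self_eq_zero.mp (key _)
      have h1 : dv u = lam⁻¹ • p := sub_eq_zero.mp h0
      rw [h1, smul_smul, mul_inv_cancel₀ (ne_of_gt hlam), one_smul]
    · intro h q
      rw [h, real_inner_smul_left, real_inner_comm q (dv u)]
      field_simp
      ring
  -- the single problem is equivalent to B u v = l v with p = lam • dv u
  have hequiv : ∀ (u : V) (p : QL),
      ((∀ v : V, 2 * μ * ⟪eps u, eps v⟫ + ⟪J (PZ u), J (PZ v)⟫ + ⟪p, dv v⟫ = l v)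
        ∧ (∀ q : QL, ⟪q, dv u⟫ - lam⁻¹ * ⟪p, q⟫ = 0))
      ↔ ((∀ v : V, B u v = l v) ∧ p = lam • dv u) := by
    intro u p
    rw [hsecond u p]
    constructor
    · rintro ⟨h1, h2⟩
      refine ⟨fun v => ?_, h2⟩
      rw [hB u v, ← h1 v, h2, real_inner_smul_left]
      try ring
    · rintro ⟨h1, h2⟩
      refine ⟨fun v => ?_, h2⟩
      rw [← h1 v, hB u v, h2, real_inner_smul_left]
      try ring
  clear hPZc
  clear_value B
  clear_value PZc
  clear PZc
  -- uniqueness for B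
  have hBuniq : ∀ u u' : V, (∀ v, B u v = l v) → (∀ v, B u' v = l v) → u = u' := by
    intro u u' h h'
    obtain ⟨C, hC, hco⟩ := hcoer
    have hz : B (u - u') (u - u') = 0 := by
      have : ∀ v, B (u - u') v = 0 := by
        intro v
        rw [map_sub, ContinuousLinearMap.sub_apply, h v, h' v, sub_self]
      exact this _
    have hle := hco (u - u')
    rw [hz] at hle
    have h0 : C * ‖u - u'‖ * ‖u - u'‖ = 0 := le_antisymm hle (by positivity)
    have h1 : ‖u - u'‖ * ‖u - u'‖ = 0 := by
      rcases mul_eq_zero.mp h0 with h'' | h''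
      · rcases mul_eq_zero.mp h'' with h3 | h3
        · exact absurd h3 (ne_of_gt hC)
        · rw [h3, zero_mul]
      · rw [h'', mul_zero]
    have hn : ‖u - u'‖ = 0 := mul_self_eq_zero.mp h1
    exact sub_eq_zero.mp (norm_eq_zero.mp hn)
  -- existence via Lax-Milgram
  obtain ⟨u₀, hu₀⟩ : ∃ u₀ : V, ∀ v, B u₀ v = l v := by
    refine ⟨hcoer.continuousLinearEquivOfBilin.symm
      ((InnerProductSpace.toDual ℝ V).symm l), fun v => ?_⟩
    have h1 := hcoer.continuousLinearEquivOfBilin_apply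
      (hcoer.continuousLinearEquivOfBilin.symm ((InnerProductSpace.toDual ℝ V).symm l)) v
    rw [ContinuousLinearEquiv.apply_symm_apply] at h1
    rw [← h1, InnerProductSpace.toDual_symm_apply]
  constructor
  · -- existence and uniqueness of the pair
    refine ⟨(u₀, lam • dv u₀), ?_, ?_⟩
    · exact (hequiv u₀ (lam • dv u₀)).mpr ⟨hu₀, rfl⟩
    · rintro ⟨u', p'⟩ h'
      obtain ⟨h1', h2'⟩ := (hequiv u' p').mp h'
      have hu : u' = u₀ := hBuniq u' u₀ h1' hu₀
      subst hu
      rw [Prod.mk.injEq]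
      exact ⟨rfl, h2'⟩
  · -- the three-field problem
    intro hl u p hsol
    obtain ⟨h1, h2⟩ := hsol
    -- PZ u = 0
    have hkey : ∀ z ∈ Z, ⟪J (PZ u), J z⟫ = 0 := by
      intro z hz
      have hv := h1 z
      rw [hepsZ z hz, hdvZ z hz, hPZid z hz, hl z hz] at hv
      simpa using hv
    have hPZu0 : PZ u = 0 := by
      have := hkey (PZ u) (hPZmem u)
      have h0 : J (PZ u) = 0 := inner_self_eq_zero.mp this
      exact hJ (by rw [h0, map_zero])
    have horth : ∀ z ∈ Z, ⟪J u, J z⟫ = 0 := by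
      intro z hz
      have := hPZperp u z hz
      rw [hPZu0] at this
      simpa using this
    refine ⟨horth, ⟨?_, h2, ?_⟩, ?_⟩
    · intro v
      have := h1 v
      rw [hPZu0] at this
      simp only [map_zero, inner_zero_left] at this ⊢
      linarith
    · intro η hη
      rw [real_inner_comm]
      exact horth η hη
    · -- uniqueness of the three-field solution
      intro u' p' ν' hν'Z ⟨g1, g2, g3⟩
      have hν0 : ν' = 0 := by
        have hk : ∀ z ∈ Z, ⟪J ν', J z⟫ = 0 := by
          intro z hz
          have hv := g1 z
          rw [hepsZ z hz, hdvZ z hz, hl z hz] at hv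
          simpa using hv
        have := hk ν' hν'Z
        have h0 : J ν' = 0 := inner_self_eq_zero.mp this
        exact hJ (by rw [h0, map_zero])
      have hPZu'0 : PZ u' = 0 := by
        have h := hPZperp u' (PZ u') (hPZmem u')
        have h3 := g3 (PZ u') (hPZmem u')
        have heq : ⟪J (PZ u'), J (PZ u')⟫ = 0 := by
          rw [map_sub, inner_sub_left] at h
          rw [real_inner_comm] at h3
          linarith
        have h0 : J (PZ u') = 0 := inner_self_eq_zero.mp heq
        exact hJ (by rw [h0, map_zero])
      -- u' solves the single saddle point problem
      have hsol' : (∀ v : V, 2 * μ * ⟪eps u', eps v⟫ + ⟪J (PZ u'), J (PZ v)⟫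
            + ⟪p', dv v⟫ = l v)
          ∧ (∀ q : QL, ⟪q, dv u'⟫ - lam⁻¹ * ⟪p', q⟫ = 0) := by
        refine ⟨fun v => ?_, g2⟩
        have := g1 v
        rw [hν0] at this
        rw [hPZu'0]
        simp only [map_zero, inner_zero_left] at this ⊢
        linarith
      obtain ⟨h1', h2'⟩ := (hequiv u' p').mp hsol'
      obtain ⟨h1u, h2u⟩ := (hequiv u p).mp ⟨h1, h2⟩
      have huu : u' = u := hBuniq u' u h1' h1u
      refine ⟨huu, ?_, hν0⟩
      rw [h2', h2u, huu]
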